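/- Let τ₀, u₀, ν, F > 0, r > 0, s ≥ 0, set c_s := τ₀^{-3/2}/√F and df_* := ((s+1)/r)·(u₀/τ₀), assume df_* > c_s, take c = c_s, and let k_H := √( (τ₀² r / (c_s ν u₀)) · (df_* − c_s) ). Let P(λ,k) := λ² + (r/u₀ − 2ic_s k + νk²/τ₀²)·λ + ik·[(s+1)/τ₀ − c_s r/u₀ − c_s νk²/τ₀²]. Suppose λ : ℝ → ℂ is differentiable at k_H, λ(k_H) = 0, and P(λ(k), k) = 0 for all k in a neighborhood of k_H. Then λ'(k_H) = (2 c_s ν / τ₀²) · i k_H² / (r/u₀ + νk_H²/τ₀² − 2i c_s k_H), and λ'(k_H) is not purely imaginary, i.e. Re λ'(k_H) ≠ 0. -/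

import Mathlib

/-- Transversality at the Hopf bifurcation for the viscous St. Venant
equations: at `c = c_s`, the root of the dispersion relation vanishing at the
Hopf frequency `k_H` satisfies
`λ'(k_H) = (2c_sν/τ₀²)·ik_H²/(r/u₀ + νk_H²/τ₀² − 2ic_sk_H)`, which is not
purely imaginary. -/
theorem stmt8 (τ₀ u₀ ν F r s : ℝ) (hτ₀ : 0 < τ₀) (hu₀ : 0 < u₀) (hν : 0 < ν)
    (hF : 0 < F) (hr : 0 < r) (hs : 0 ≤ s)
    (cs : ℝ) (hcs : cs = τ₀ ^ (-(3 : ℝ) / 2) / Real.sqrt F)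
    (df : ℝ) (hdf : df = ((s + 1) / r) * (u₀ / τ₀)) (hsub : df > cs)
    (kH : ℝ) (hkH : kH = Real.sqrt ((τ₀ ^ 2 * r / (cs * ν * u₀)) * (df - cs)))
    (P : ℂ → ℝ → ℂ)
    (hP : ∀ (lam : ℂ) (k : ℝ), P lam k =
      lam ^ 2
        + ((r : ℂ) / (u₀ : ℂ) - 2 * Complex.I * (cs : ℂ) * (k : ℂ)
            + (ν : ℂ) * (k : ℂ) ^ 2 / (τ₀ : ℂ) ^ 2) * lam
        + Complex.I * (k : ℂ) *
            (((s : ℂ) + 1) / (τ₀ : ℂ) - (cs : ℂ) * (r : ℂ) / (u₀ : ℂ)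
              - (cs : ℂ) * (ν : ℂ) * (k : ℂ) ^ 2 / (τ₀ : ℂ) ^ 2))
    (lam : ℝ → ℂ)
    (hdiff : DifferentiableAt ℝ lam kH)
    (hlamkH : lam kH = 0)
    (hroot : ∀ᶠ k in nhds kH, P (lam k) k = 0) :
    deriv lam kH
      = (2 * (cs : ℂ) * (ν : ℂ) / (τ₀ : ℂ) ^ 2) * (Complex.I * (kH : ℂ) ^ 2)
          / ((r : ℂ) / (u₀ : ℂ) + (ν : ℂ) * (kH : ℂ) ^ 2 / (τ₀ : ℂ) ^ 2
              - 2 * Complex.I * (cs : ℂ) * (kH : ℂ))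
    ∧ (deriv lam kH).re ≠ 0 := by
  have hcs0 : 0 < cs := by
    rw [hcs]
    positivity
  have hdfcs : 0 < df - cs := sub_pos.mpr hsub
  have harg : 0 < (τ₀ ^ 2 * r / (cs * ν * u₀)) * (df - cs) := by positivity
  have hkH0 : 0 < kH := by rw [hkH]; exact Real.sqrt_pos.mpr harg
  have hk2 : kH ^ 2 = (τ₀ ^ 2 * r / (cs * ν * u₀)) * (df - cs) := by
    rw [hkH, Real.sq_sqrt harg.le]
  -- key algebraic relation: kH is a root of the imaginary coefficient
  have key : (s + 1) / τ₀ - cs * r / u₀ - cs * ν * kH ^ 2 / τ₀ ^ 2 = 0 := by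
    rw [hk2, hdf]
    field_simp
    ring
  have keyC : ((s : ℂ) + 1) / (τ₀ : ℂ) - (cs : ℂ) * (r : ℂ) / (u₀ : ℂ)
      - (cs : ℂ) * (ν : ℂ) * (kH : ℂ) ^ 2 / (τ₀ : ℂ) ^ 2 = 0 := by
    have := congrArg (Complex.ofReal) key
    push_cast at this
    exact this
  -- the explicit dispersion function
  set g : ℝ → ℂ := fun k =>
      (lam k) ^ 2
        + ((r : ℂ) / (u₀ : ℂ) - 2 * Complex.I * (cs : ℂ) * (k : ℂ)
            + (ν : ℂ) * (k : ℂ) ^ 2 / (τ₀ : ℂ) ^ 2) * lam k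
        + Complex.I * (k : ℂ) *
            (((s : ℂ) + 1) / (τ₀ : ℂ) - (cs : ℂ) * (r : ℂ) / (u₀ : ℂ)
              - (cs : ℂ) * (ν : ℂ) * (k : ℂ) ^ 2 / (τ₀ : ℂ) ^ 2) with hg
  have hgroot : ∀ᶠ k in nhds kH, g k = 0 := by
    filter_upwards [hroot] with k hk
    rw [hg]
    simpa [hP] using hk
  have hφ : HasDerivAt (fun k : ℝ => (k : ℂ)) 1 kH := by
    have h := Complex.ofRealCLM.hasDerivAt (x := kH)
    simp at h
    exact h
  have hlam : HasDerivAt lam (deriv lam kH) kH := hdiff.hasDerivAt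
  have hφ2 : HasDerivAt (fun k : ℝ => (k : ℂ) ^ 2) (2 * (kH : ℂ)) kH := by
    have h := hφ.mul hφ
    simp only [one_mul, mul_one] at h
    have h2 : (2 : ℂ) * (kH : ℂ) = (kH : ℂ) + (kH : ℂ) := by ring
    rw [h2]
    simp only [pow_two]
    exact h
  set L' : ℂ := deriv lam kH with hL'
  have hb : HasDerivAt (fun k : ℝ => (r : ℂ) / (u₀ : ℂ)
      - 2 * Complex.I * (cs : ℂ) * (k : ℂ) + (ν : ℂ) * (k : ℂ) ^ 2 / (τ₀ : ℂ) ^ 2)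
      (-(2 * Complex.I * (cs : ℂ)) + (ν : ℂ) * (2 * (kH : ℂ)) / (τ₀ : ℂ) ^ 2) kH := by
    have h2 : HasDerivAt (fun k : ℝ => 2 * Complex.I * (cs : ℂ) * (k : ℂ))
        (2 * Complex.I * (cs : ℂ)) kH := by
      simpa using hφ.const_mul (2 * Complex.I * (cs : ℂ))
    have h3 : HasDerivAt (fun k : ℝ => (ν : ℂ) * (k : ℂ) ^ 2 / (τ₀ : ℂ) ^ 2)
        ((ν : ℂ) * (2 * (kH : ℂ)) / (τ₀ : ℂ) ^ 2) kH := by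
      have := (hφ2.const_mul (ν : ℂ)).div_const ((τ₀ : ℂ) ^ 2)
      convert this using 1
    have h := ((hasDerivAt_const kH ((r : ℂ) / (u₀ : ℂ))).sub h2).add h3
    simp at h
    exact h
  have hc : HasDerivAt (fun k : ℝ => Complex.I * (k : ℂ) *
      (((s : ℂ) + 1) / (τ₀ : ℂ) - (cs : ℂ) * (r : ℂ) / (u₀ : ℂ)
        - (cs : ℂ) * (ν : ℂ) * (k : ℂ) ^ 2 / (τ₀ : ℂ) ^ 2))
      (Complex.I * 1 *
        (((s : ℂ) + 1) / (τ₀ : ℂ) - (cs : ℂ) * (r : ℂ) / (u₀ : ℂ)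
          - (cs : ℂ) * (ν : ℂ) * (kH : ℂ) ^ 2 / (τ₀ : ℂ) ^ 2)
       + Complex.I * (kH : ℂ) * (-((cs : ℂ) * (ν : ℂ) * (2 * (kH : ℂ)) / (τ₀ : ℂ) ^ 2))) kH := by
    have h1 : HasDerivAt (fun k : ℝ => Complex.I * (k : ℂ)) (Complex.I * 1) kH :=
      hφ.const_mul Complex.I
    have h4 : HasDerivAt (fun k : ℝ => (cs : ℂ) * (ν : ℂ) * (k : ℂ) ^ 2 / (τ₀ : ℂ) ^ 2)
        ((cs : ℂ) * (ν : ℂ) * (2 * (kH : ℂ)) / (τ₀ : ℂ) ^ 2) kH := by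
      have := (hφ2.const_mul ((cs : ℂ) * (ν : ℂ))).div_const ((τ₀ : ℂ) ^ 2)
      convert this using 1
    have h5 := (hasDerivAt_const kH (((s : ℂ) + 1) / (τ₀ : ℂ)
        - (cs : ℂ) * (r : ℂ) / (u₀ : ℂ))).sub h4
    have := h1.mul h5
    convert this using 1
    · rfl
    · rfl
    · simp only [Pi.sub_apply]; ring
  have hgd : HasDerivAt g
      ((L' * lam kH + lam kH * L')
        + ((-(2 * Complex.I * (cs : ℂ)) + (ν : ℂ) * (2 * (kH : ℂ)) / (τ₀ : ℂ) ^ 2) * lam kH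
            + ((r : ℂ) / (u₀ : ℂ) - 2 * Complex.I * (cs : ℂ) * (kH : ℂ)
                + (ν : ℂ) * (kH : ℂ) ^ 2 / (τ₀ : ℂ) ^ 2) * L')
        + (Complex.I * 1 *
            (((s : ℂ) + 1) / (τ₀ : ℂ) - (cs : ℂ) * (r : ℂ) / (u₀ : ℂ)
              - (cs : ℂ) * (ν : ℂ) * (kH : ℂ) ^ 2 / (τ₀ : ℂ) ^ 2)
           + Complex.I * (kH : ℂ) * (-((cs : ℂ) * (ν : ℂ) * (2 * (kH : ℂ)) / (τ₀ : ℂ) ^ 2)))) kH :=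
    by
    have hsq : HasDerivAt (fun k : ℝ => lam k ^ 2) (L' * lam kH + lam kH * L') kH := by
      simp only [pow_two]
      exact hlam.mul hlam
    exact (hsq.add (hb.mul hlam)).add hc
  have hder0 : deriv g kH = 0 := by
    have h : deriv g kH = deriv (fun _ : ℝ => (0 : ℂ)) kH :=
      Filter.EventuallyEq.deriv_eq hgroot
    simpa using h
  have hE : ((L' * lam kH + lam kH * L')
        + ((-(2 * Complex.I * (cs : ℂ)) + (ν : ℂ) * (2 * (kH : ℂ)) / (τ₀ : ℂ) ^ 2) * lam kH
            + ((r : ℂ) / (u₀ : ℂ) - 2 * Complex.I * (cs : ℂ) * (kH : ℂ)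
                + (ν : ℂ) * (kH : ℂ) ^ 2 / (τ₀ : ℂ) ^ 2) * L')
        + (Complex.I * 1 *
            (((s : ℂ) + 1) / (τ₀ : ℂ) - (cs : ℂ) * (r : ℂ) / (u₀ : ℂ)
              - (cs : ℂ) * (ν : ℂ) * (kH : ℂ) ^ 2 / (τ₀ : ℂ) ^ 2)
           + Complex.I * (kH : ℂ) * (-((cs : ℂ) * (ν : ℂ) * (2 * (kH : ℂ)) / (τ₀ : ℂ) ^ 2)))) = 0 := by
    rw [← hgd.deriv]
    exact hder0
  rw [hlamkH, keyC] at hE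
  -- simplify the equation to  bH * L' = 2*I*cs*ν*kH²/τ₀²
  set bH : ℂ := (r : ℂ) / (u₀ : ℂ) + (ν : ℂ) * (kH : ℂ) ^ 2 / (τ₀ : ℂ) ^ 2
      - 2 * Complex.I * (cs : ℂ) * (kH : ℂ) with hbH
  have hEq : bH * L' = 2 * Complex.I * (cs : ℂ) * (ν : ℂ) * (kH : ℂ) ^ 2 / (τ₀ : ℂ) ^ 2 := by
    have := hE
    rw [hbH]
    linear_combination hE
  have hden : bH = ((r / u₀ + ν * kH ^ 2 / τ₀ ^ 2 : ℝ) : ℂ)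
      - ((2 * cs * kH : ℝ) : ℂ) * Complex.I := by
    rw [hbH]
    push_cast
    ring
  have hbHne : bH ≠ 0 := by
    intro h
    have hre : bH.re = r / u₀ + ν * kH ^ 2 / τ₀ ^ 2 := by
      rw [hden, Complex.sub_re, Complex.ofReal_re, Complex.mul_re, Complex.ofReal_re,
        Complex.ofReal_im, Complex.I_re, Complex.I_im]
      ring
    have hpos : 0 < r / u₀ + ν * kH ^ 2 / τ₀ ^ 2 := by positivity
    rw [h] at hre
    simp at hre
    exact hpos.ne' hre.symm
  have hformula : L' = (2 * (cs : ℂ) * (ν : ℂ) / (τ₀ : ℂ) ^ 2) * (Complex.I * (kH : ℂ) ^ 2) / bH := by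
    rw [eq_div_iff hbHne, mul_comm]
    rw [hEq]
    ring
  constructor
  · exact hformula
  · rw [hformula]
    have hnum : (2 * (cs : ℂ) * (ν : ℂ) / (τ₀ : ℂ) ^ 2) * (Complex.I * (kH : ℂ) ^ 2)
        = ((2 * cs * ν * kH ^ 2 / τ₀ ^ 2 : ℝ) : ℂ) * Complex.I := by
      push_cast
      ring
    rw [hnum, hden]
    set a : ℝ := 2 * cs * ν * kH ^ 2 / τ₀ ^ 2 with ha
    set X : ℝ := r / u₀ + ν * kH ^ 2 / τ₀ ^ 2 with hX
    set Y : ℝ := 2 * cs * kH with hY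
    have ha0 : 0 < a := by rw [ha]; positivity
    have hX0 : 0 < X := by rw [hX]; positivity
    have hY0 : 0 < Y := by rw [hY]; positivity
    have hre : (((a : ℂ) * Complex.I) / ((X : ℂ) - (Y : ℂ) * Complex.I)).re
        = -(a * Y) / (X ^ 2 + Y ^ 2) := by
      rw [Complex.div_re]
      simp [Complex.normSq_apply]
      ring
    rw [hre]
    have : 0 < a * Y / (X ^ 2 + Y ^ 2) := by positivity
    intro h
    rw [neg_div] at h
    exact this.ne' (neg_eq_zero.mp h)
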